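/- The map (F, Y) ↦ trace(F · Y^{-1/2} · Fᵀ) is jointly convex on ℝ^{d×d} × S⁺⁺(ℝ^{d×d}), where Y^{-1/2} denotes the inverse square root of the symmetric positive definite matrix Y. -/

import Mathlib

open Matrix
open scoped Classical

/-- The inverse square root of a positive definite matrix: the positive semidefinite
square root of its inverse (junk value `0` off the positive definite cone). -/
noncomputable def invSqrt {d : ℕ} (Y : Matrix (Fin d) (Fin d) ℝ) :
    Matrix (Fin d) (Fin d) ℝ :=
  if h : Y.PosDef then
    ((h.inv.posSemidef).1.eigenvectorUnitary : Matrix (Fin d) (Fin d) ℝ) *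
      diagonal ((↑) ∘ (√·) ∘ (h.inv.posSemidef).1.eigenvalues) *
      (star (h.inv.posSemidef).1.eigenvectorUnitary : Matrix (Fin d) (Fin d) ℝ)
  else 0

/-- The old Mathlib `PosSemidef.sqrt`, restated. -/
noncomputable def Matrix.PosSemidef.sqrt {d : ℕ} {A : Matrix (Fin d) (Fin d) ℝ}
    (hA : A.PosSemidef) : Matrix (Fin d) (Fin d) ℝ :=
  (hA.1.eigenvectorUnitary : Matrix (Fin d) (Fin d) ℝ) *
    diagonal ((↑) ∘ (√·) ∘ hA.1.eigenvalues) *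
    (star hA.1.eigenvectorUnitary : Matrix (Fin d) (Fin d) ℝ)

open scoped MatrixOrder in
lemma Matrix.PosSemidef.sqrt_eq_cfc {d : ℕ} {A : Matrix (Fin d) (Fin d) ℝ}
    (hA : A.PosSemidef) : hA.sqrt = CFC.sqrt A := by
  rw [CFC.sqrt_eq_cfc, cfc_nnreal_eq_real _ A, hA.1.cfc_eq, IsHermitian.cfc,
    Unitary.conjStarAlgAut_apply, Matrix.PosSemidef.sqrt]
  congr 3
  funext i
  simp [Real.coe_sqrt, hA.eigenvalues_nonneg i]

open scoped MatrixOrder in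
lemma Matrix.PosSemidef.sqrt_mul_self {d : ℕ} {A : Matrix (Fin d) (Fin d) ℝ}
    (hA : A.PosSemidef) : hA.sqrt * hA.sqrt = A := by
  rw [hA.sqrt_eq_cfc]
  exact CFC.sqrt_mul_sqrt_self A hA.nonneg

open scoped MatrixOrder in
lemma Matrix.PosSemidef.posSemidef_sqrt {d : ℕ} {A : Matrix (Fin d) (Fin d) ℝ}
    (hA : A.PosSemidef) : hA.sqrt.PosSemidef := by
  rw [hA.sqrt_eq_cfc]
  exact (CFC.sqrt_nonneg A).posSemidef

open scoped MatrixOrder in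
lemma Matrix.PosSemidef.eq_sqrt_of_sq_eq {d : ℕ} {A B : Matrix (Fin d) (Fin d) ℝ}
    (hB : B.PosSemidef) (hA : A.PosSemidef) (h : B ^ 2 = A) : B = hA.sqrt := by
  rw [hA.sqrt_eq_cfc, eq_comm, CFC.sqrt_eq_iff _ _ hA.nonneg hB.nonneg, ← sq, h]

section Helpers

variable {d : ℕ}

abbrev Mat (d : ℕ) := Matrix (Fin d) (Fin d) ℝ

lemma psd_smul {A : Mat d} (hA : A.PosSemidef) {a : ℝ} (ha : 0 ≤ a) :
    (a • A).PosSemidef := by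
  exact hA.smul ha

lemma pd_smul {A : Mat d} (hA : A.PosDef) {a : ℝ} (ha : 0 < a) :
    (a • A).PosDef := by
  exact hA.smul ha

lemma pd_combo {Y₁ Y₂ : Mat d} (h1 : Y₁.PosDef) (h2 : Y₂.PosDef) {a b : ℝ}
    (ha : 0 ≤ a) (hb : 0 ≤ b) (hab : a + b = 1) : (a • Y₁ + b • Y₂).PosDef := by
  rcases eq_or_lt_of_le ha with h | h
  · have hb1 : b = 1 := by linarith
    simp [← h, hb1, h2]
  · exact (pd_smul h1 h).add_posSemidef (psd_smul h2.posSemidef hb)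

lemma trace_nonneg_of_psd {A : Mat d} (hA : A.PosSemidef) : 0 ≤ A.trace := by
  exact hA.trace_nonneg

lemma trace_quad_nonneg {M : Mat d} (hM : M.PosSemidef) (X : Mat d) :
    0 ≤ (X * M * Xᵀ).trace := by
  have := hM.mul_mul_conjTranspose_same X
  rw [conjTranspose_eq_transpose_of_trivial] at this
  exact trace_nonneg_of_psd this

lemma mulVec_eq_zero_of_quad_zero {P : Mat d} (hP : P.PosSemidef) {v : Fin d → ℝ}
    (hv : v ⬝ᵥ P *ᵥ v = 0) : P *ᵥ v = 0 := by
  exact (hP.dotProduct_mulVec_zero_iff v).mp (by simpa using hv)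

lemma sqrt_det_isUnit {Y : Mat d} (hY : Y.PosDef) : IsUnit hY.posSemidef.sqrt.det := by
  have h : hY.posSemidef.sqrt.det * hY.posSemidef.sqrt.det = Y.det := by
    rw [← det_mul, hY.posSemidef.sqrt_mul_self]
  have := hY.det_pos
  refine isUnit_iff_ne_zero.mpr fun h0 => ?_
  rw [h0, mul_zero] at h
  linarith [h ▸ this]

lemma invSqrt_eq_inv_sqrt {Y : Mat d} (hY : Y.PosDef) :
    invSqrt Y = (hY.posSemidef.sqrt)⁻¹ := by
  rw [invSqrt, dif_pos hY]
  refine ((hY.posSemidef.posSemidef_sqrt.inv).eq_sqrt_of_sq_eq hY.inv.posSemidef ?_).symm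
  rw [pow_two, ← Matrix.mul_inv_rev, hY.posSemidef.sqrt_mul_self]

lemma invSqrt_mul_sqrt {Y : Mat d} (hY : Y.PosDef) :
    invSqrt Y * hY.posSemidef.sqrt = 1 := by
  rw [invSqrt_eq_inv_sqrt hY]
  exact nonsing_inv_mul _ (sqrt_det_isUnit hY)

lemma sqrt_mul_invSqrt {Y : Mat d} (hY : Y.PosDef) :
    hY.posSemidef.sqrt * invSqrt Y = 1 := by
  rw [invSqrt_eq_inv_sqrt hY]
  exact mul_nonsing_inv _ (sqrt_det_isUnit hY)

lemma invSqrt_posSemidef {Y : Mat d} (hY : Y.PosDef) : (invSqrt Y).PosSemidef := by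
  rw [invSqrt, dif_pos hY]
  exact hY.inv.posSemidef.posSemidef_sqrt

lemma invSqrt_transpose {Y : Mat d} (hY : Y.PosDef) : (invSqrt Y)ᵀ = invSqrt Y := by
  rw [← conjTranspose_eq_transpose_of_trivial]
  exact (invSqrt_posSemidef hY).1

lemma sqrt_transpose {A : Mat d} (hA : A.PosSemidef) : (hA.sqrt)ᵀ = hA.sqrt := by
  rw [← conjTranspose_eq_transpose_of_trivial]
  exact hA.posSemidef_sqrt.1

lemma sqrt_mono {C S : Mat d} (hC : C.PosSemidef) (hS : S.PosSemidef)
    (h : (C - S * S).PosSemidef) : (hC.sqrt - S).PosSemidef := by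
  have hD : (hC.sqrt).PosSemidef := hC.posSemidef_sqrt
  set D := hC.sqrt with hDdef
  have hM : (D - S).IsHermitian := hD.1.sub hS.1
  refine hM.posSemidef_iff_eigenvalues_nonneg.mpr fun i => ?_
  by_contra hneg
  push_neg at hneg
  rw [Pi.zero_apply] at hneg
  set μ := hM.eigenvalues i with hμdef
  set v : Fin d → ℝ := ⇑(hM.eigenvectorBasis i) with hvdef
  have hv : (D - S) *ᵥ v = μ • v := hM.mulVec_eigenvectorBasis i
  have hvne : v ≠ 0 := by
    have h0 : hM.eigenvectorBasis i ≠ 0 := hM.eigenvectorBasis.orthonormal.ne_zero i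
    intro hc
    exact h0 (by ext j; exact congrFun hc j)
  have hstar : ∀ w : Fin d → ℝ, star w = w := fun w => by
    funext j; exact star_trivial _
  have hqD : 0 ≤ v ⬝ᵥ D *ᵥ v := by have := hD.dotProduct_mulVec_nonneg v; rwa [hstar] at this
  have hqS : 0 ≤ v ⬝ᵥ S *ᵥ v := by have := hS.dotProduct_mulVec_nonneg v; rwa [hstar] at this
  have hkey : 0 ≤ v ⬝ᵥ (C - S * S) *ᵥ v := by have := h.dotProduct_mulVec_nonneg v; rwa [hstar] at this
  have hid : C - S * S = D * (D - S) + (D - S) * S := by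
    have hDD : D * D = C := hC.sqrt_mul_self
    rw [← hDD]; noncomm_ring
  have hsymm : (D - S)ᵀ = D - S := by
    rw [← conjTranspose_eq_transpose_of_trivial, hM]
  have hquad : v ⬝ᵥ (C - S * S) *ᵥ v = μ * (v ⬝ᵥ D *ᵥ v + v ⬝ᵥ S *ᵥ v) := by
    rw [hid, add_mulVec, dotProduct_add, ← mulVec_mulVec, ← mulVec_mulVec, hv]
    have h2 : v ⬝ᵥ (D - S) *ᵥ (S *ᵥ v) = (μ • v) ⬝ᵥ (S *ᵥ v) := by
      rw [dotProduct_mulVec, ← hv, ← hsymm, vecMul_transpose, hsymm]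
    rw [h2, mulVec_smul, dotProduct_smul, smul_dotProduct]
    simp [smul_eq_mul]
    ring
  rw [hquad] at hkey
  have hsum : v ⬝ᵥ D *ᵥ v + v ⬝ᵥ S *ᵥ v ≤ 0 := by
    by_contra hc
    push_neg at hc
    nlinarith
  have hqD0 : v ⬝ᵥ D *ᵥ v = 0 := by linarith
  have hqS0 : v ⬝ᵥ S *ᵥ v = 0 := by linarith
  have hDS0 : (D + S) *ᵥ v = 0 := by
    refine mulVec_eq_zero_of_quad_zero (hD.add hS) ?_
    rw [add_mulVec, dotProduct_add, hqD0, hqS0, add_zero]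
  have hDv : (2 : ℝ) • (D *ᵥ v) = μ • v := by
    have h1 : D *ᵥ v - S *ᵥ v = μ • v := by rw [← sub_mulVec, hv]
    have h2 : D *ᵥ v + S *ᵥ v = 0 := by rw [← add_mulVec, hDS0]
    have : S *ᵥ v = -(D *ᵥ v) := by
      funext j; have := congrFun h2 j; simp at this ⊢; linarith
    rw [this] at h1
    funext j; have := congrFun h1 j; simp at this ⊢; linarith
  have hvv : v ⬝ᵥ v = 0 := by
    have h3 : (2 : ℝ) * (v ⬝ᵥ D *ᵥ v) = μ * (v ⬝ᵥ v) := by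
      calc (2 : ℝ) * (v ⬝ᵥ D *ᵥ v) = v ⬝ᵥ ((2 : ℝ) • (D *ᵥ v)) := by
            rw [dotProduct_smul, smul_eq_mul]
        _ = v ⬝ᵥ (μ • v) := by rw [hDv]
        _ = μ * (v ⬝ᵥ v) := by rw [dotProduct_smul, smul_eq_mul]
    rw [hqD0, mul_zero] at h3
    have hμne : μ ≠ 0 := ne_of_lt hneg
    field_simp at h3
    exact (mul_eq_zero.mp h3.symm).resolve_left hμne
  exact hvne (dotProduct_self_eq_zero.mp hvv)

lemma sqrt_concave {A B : Mat d} (hA : A.PosSemidef) (hB : B.PosSemidef) {a b : ℝ}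
    (ha : 0 ≤ a) (hb : 0 ≤ b) (hab : a + b = 1) (hC : (a • A + b • B).PosSemidef) :
    (hC.sqrt - (a • hA.sqrt + b • hB.sqrt)).PosSemidef := by
  have hP : (hA.sqrt).PosSemidef := hA.posSemidef_sqrt
  have hQ : (hB.sqrt).PosSemidef := hB.posSemidef_sqrt
  set P := hA.sqrt with hPdef
  set Q := hB.sqrt with hQdef
  set S := a • P + b • Q with hSdef
  have hSpsd : S.PosSemidef := (psd_smul hP ha).add (psd_smul hQ hb)
  refine sqrt_mono hC hSpsd ?_
  have hid : a • A + b • B - S * S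
      = a • ((P - S) * (P - S)) + b • ((Q - S) * (Q - S)) := by
    rw [← hA.sqrt_mul_self, ← hB.sqrt_mul_self]
    have hb' : b = 1 - a := by linarith
    subst hb'
    simp only [hSdef, sub_mul, mul_sub, add_mul, mul_add, smul_mul_assoc, mul_smul_comm,
      smul_add, smul_sub, smul_smul]
    module
  rw [hid]
  have hsq : ∀ (X : Mat d), X.IsHermitian → (X * X).PosSemidef := by
    intro X hX
    have := posSemidef_conjTranspose_mul_self X
    rwa [hX.eq] at this
  exact (psd_smul (hsq _ (hP.1.sub hSpsd.1)) ha).add (psd_smul (hsq _ (hQ.1.sub hSpsd.1)) hb)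

lemma key_ineq {Y : Mat d} (hY : Y.PosDef) (F X : Mat d) :
    2 * (X * Fᵀ).trace - (X * hY.posSemidef.sqrt * Xᵀ).trace
      ≤ (F * invSqrt Y * Fᵀ).trace := by
  set R := hY.posSemidef.sqrt with hRdef
  set G := F * invSqrt Y with hGdef
  have h0 : 0 ≤ ((X - G) * R * (X - G)ᵀ).trace :=
    trace_quad_nonneg hY.posSemidef.posSemidef_sqrt _
  have hGt : Gᵀ = invSqrt Y * Fᵀ := by rw [hGdef, transpose_mul, invSqrt_transpose hY]
  have e0 : G * R = F := by
    rw [hGdef, mul_assoc, hRdef, invSqrt_mul_sqrt hY, mul_one]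
  have e1 : G * R * Gᵀ = F * invSqrt Y * Fᵀ := by rw [e0, hGt, ← mul_assoc]
  have e2 : X * R * Gᵀ = X * Fᵀ := by
    rw [hGt, mul_assoc, ← mul_assoc R, hRdef, sqrt_mul_invSqrt hY, one_mul]
  have e3 : (G * R * Xᵀ).trace = (X * Fᵀ).trace := by
    rw [e0, ← trace_transpose (F * Xᵀ), transpose_mul, transpose_transpose]
  have expand : (X - G) * R * (X - G)ᵀ
      = X * R * Xᵀ - X * R * Gᵀ - G * R * Xᵀ + G * R * Gᵀ := by
    rw [transpose_sub]; noncomm_ring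
  rw [expand] at h0
  rw [trace_add, trace_sub, trace_sub, e1, e2, e3] at h0
  linarith

lemma key_eq {Y : Mat d} (hY : Y.PosDef) (F : Mat d) :
    2 * ((F * invSqrt Y) * Fᵀ).trace
      - ((F * invSqrt Y) * hY.posSemidef.sqrt * (F * invSqrt Y)ᵀ).trace
      = (F * invSqrt Y * Fᵀ).trace := by
  have hGt : (F * invSqrt Y)ᵀ = invSqrt Y * Fᵀ := by
    rw [transpose_mul, invSqrt_transpose hY]
  have e0 : (F * invSqrt Y) * hY.posSemidef.sqrt = F := by
    rw [mul_assoc, invSqrt_mul_sqrt hY, mul_one]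
  rw [e0, hGt, ← mul_assoc]
  ring

end Helpers

/-- Lieb-type convexity: `(F, Y) ↦ trace (F * Y^{-1/2} * Fᵀ)` is jointly convex on
`ℝ^{d×d} × S⁺⁺(ℝ^{d×d})`. -/
theorem stmt_3 {d : ℕ} :
    ConvexOn ℝ
      {p : Matrix (Fin d) (Fin d) ℝ × Matrix (Fin d) (Fin d) ℝ | p.2.PosDef}
      (fun p => (p.1 * invSqrt p.2 * p.1ᵀ).trace) := by
  constructor
  · intro p hp q hq a b ha hb hab
    simp only [Set.mem_setOf_eq] at hp hq ⊢
    exact pd_combo hp hq ha hb hab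
  · intro p hp q hq a b ha hb hab
    simp only [Set.mem_setOf_eq] at hp hq
    have hY : (a • p.2 + b • q.2).PosDef := pd_combo hp hq ha hb hab
    set F : Mat d := a • p.1 + b • q.1 with hFdef
    set Ybar : Mat d := a • p.2 + b • q.2 with hYdef
    set X : Mat d := F * invSqrt Ybar with hXdef
    have hfst : (a • p + b • q).1 = F := rfl
    have hsnd : (a • p + b • q).2 = Ybar := rfl
    simp only [smul_eq_mul]
    rw [hfst, hsnd]
    rw [← key_eq hY F]
    -- trace of X * Fᵀ splits
    have hXF : (X * Fᵀ).trace = a * (X * p.1ᵀ).trace + b * (X * q.1ᵀ).trace := by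
      rw [hFdef, transpose_add, transpose_smul, transpose_smul, mul_add,
        mul_smul_comm, mul_smul_comm, trace_add, trace_smul, trace_smul,
        smul_eq_mul, smul_eq_mul]
    -- concavity of sqrt step
    set S : Mat d := a • (hp.posSemidef).sqrt + b • (hq.posSemidef).sqrt with hSdef
    have hconc : ((hY.posSemidef).sqrt - S).PosSemidef :=
      sqrt_concave hp.posSemidef hq.posSemidef ha hb hab hY.posSemidef
    have htr : (X * S * Xᵀ).trace ≤ (X * (hY.posSemidef).sqrt * Xᵀ).trace := by
      have h0 := trace_quad_nonneg hconc X
      have hexp : X * ((hY.posSemidef).sqrt - S) * Xᵀ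
          = X * (hY.posSemidef).sqrt * Xᵀ - X * S * Xᵀ := by
        rw [mul_sub, sub_mul]
      rw [hexp, trace_sub] at h0
      linarith
    have hsplit : (X * S * Xᵀ).trace
        = a * (X * (hp.posSemidef).sqrt * Xᵀ).trace
          + b * (X * (hq.posSemidef).sqrt * Xᵀ).trace := by
      rw [hSdef, mul_add, add_mul, mul_smul_comm, mul_smul_comm, smul_mul_assoc,
        smul_mul_assoc, trace_add, trace_smul, trace_smul, smul_eq_mul, smul_eq_mul]
    have k1 := key_ineq hp p.1 X
    have k2 := key_ineq hq q.1 X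
    have k1' := mul_le_mul_of_nonneg_left k1 ha
    have k2' := mul_le_mul_of_nonneg_left k2 hb
    rw [hXF]
    linarith
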